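/- Let r, s ∈ (0, 1) be real numbers satisfying r > 1/2 or s < 1/2, and consider the vectors u = (r − 1/2, −1) and v = (1, s − 1/2) in the Euclidean plane ℝ². Then the angle between u and v lies strictly between arccos(4/5) and arccos(−1/√5); in particular it is strictly less than 3π/4 (i.e. 135°). -/

import Mathlib

/-- The vector `(a, b)` in the Euclidean plane `ℝ²`. -/
noncomputable def vec2 (a b : ℝ) : EuclideanSpace ℝ (Fin 2) :=
  (WithLp.equiv 2 (Fin 2 → ℝ)).symm ![a, b]

lemma vec2_inner (a b c d : ℝ) :
    (inner ℝ (vec2 a b) (vec2 c d) : ℝ) = a * c + b * d := by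
  simp [vec2, PiLp.inner_apply, Fin.sum_univ_two, WithLp.equiv_symm_apply, mul_comm]

lemma vec2_norm (a b : ℝ) : ‖vec2 a b‖ = Real.sqrt (a ^ 2 + b ^ 2) := by
  rw [EuclideanSpace.norm_eq]
  simp [vec2, Fin.sum_univ_two, WithLp.equiv_symm_apply, sq_abs]

lemma aux_bounds (a b : ℝ) (ha1 : -(1/2) < a) (ha2 : a < 1/2)
    (hb1 : -(1/2) < b) (hb2 : b < 1/2) (hab : 0 < a ∨ b < 0) :
    -(1 / Real.sqrt 5) < (a - b) / (Real.sqrt (a ^ 2 + 1) * Real.sqrt (1 + b ^ 2)) ∧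
    (a - b) / (Real.sqrt (a ^ 2 + 1) * Real.sqrt (1 + b ^ 2)) < 4 / 5 := by
  have hDpos : (0:ℝ) < Real.sqrt (a ^ 2 + 1) * Real.sqrt (1 + b ^ 2) := by positivity
  generalize hDd : Real.sqrt (a ^ 2 + 1) * Real.sqrt (1 + b ^ 2) = D at hDpos ⊢
  have hD2 : D ^ 2 = (a ^ 2 + 1) * (1 + b ^ 2) := by
    rw [← hDd, mul_pow, Real.sq_sqrt (by positivity), Real.sq_sqrt (by positivity)]
  have hD1 : (1:ℝ) ≤ D := by
    have h1 : (1:ℝ) ≤ Real.sqrt (a ^ 2 + 1) := by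
      rw [Real.le_sqrt' one_pos]; nlinarith [sq_nonneg a]
    have h2 : (1:ℝ) ≤ Real.sqrt (1 + b ^ 2) := by
      rw [Real.le_sqrt' one_pos]; nlinarith [sq_nonneg b]
    rw [← hDd]; nlinarith
  have hs5 : (2:ℝ) < Real.sqrt 5 := by
    rw [Real.lt_sqrt (by norm_num)]; norm_num
  have hs5pos : (0:ℝ) < Real.sqrt 5 := by linarith
  constructor
  · rw [lt_div_iff₀ hDpos]
    rcases le_or_gt 0 (a - b) with h | h
    · have hneg : -(1 / Real.sqrt 5) * D < 0 := by
        apply mul_neg_of_neg_of_pos _ hDpos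
        rw [neg_lt, neg_zero]; positivity
      linarith
    · have hkey : Real.sqrt 5 * (b - a) < D := by
        have hsq : (Real.sqrt 5 * (b - a)) ^ 2 < D ^ 2 := by
          rw [hD2, mul_pow, Real.sq_sqrt (by norm_num : (0:ℝ) ≤ 5)]
          rcases hab with hpos | hneg
          · nlinarith [mul_pos hpos (show (0:ℝ) < 5*b - 2*a by linarith),
              mul_nonneg (show (0:ℝ) ≤ 1 - 2*b by linarith)
                (show (0:ℝ) ≤ 1 + 2*b by linarith),
              sq_nonneg (a * b)]
          · nlinarith [mul_pos (show (0:ℝ) < -b by linarith)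
                (show (0:ℝ) < 2*b - 5*a by linarith),
              mul_nonneg (show (0:ℝ) ≤ 1 - 2*a by linarith)
                (show (0:ℝ) ≤ 1 + 2*a by linarith),
              sq_nonneg (a * b)]
        have h1 : (0:ℝ) ≤ Real.sqrt 5 * (b - a) := by
          apply mul_nonneg (le_of_lt hs5pos); linarith
        nlinarith [hsq]
      have h2 : (-(1 / Real.sqrt 5) * D) * Real.sqrt 5 = -D := by
        field_simp
      nlinarith [hkey, mul_pos hs5pos hs5pos]
  · rw [div_lt_iff₀ hDpos]
    rcases le_or_gt (a - b) 0 with h | h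
    · linarith
    · have hsq : (a - b) ^ 2 < (4 / 5 * D) ^ 2 := by
        have he : (4 / 5 * D) ^ 2 = 16 / 25 * ((a ^ 2 + 1) * (1 + b ^ 2)) := by
          rw [mul_pow, hD2]; ring
        rw [he]
        nlinarith [mul_pos (show (0:ℝ) < 1 - (a - b) by linarith)
            (show (0:ℝ) < 2 - (1 - (a - b)) by linarith),
          mul_pos (mul_pos (show (0:ℝ) < 1/2 - a by linarith)
            (show (0:ℝ) < 1/2 + b by linarith)) h,
          sq_nonneg (a + b), sq_nonneg ((1/2 - a) * (1/2 + b))]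
      have h45D : (0:ℝ) < 4 / 5 * D := by positivity
      nlinarith [hsq]

/-- For `r, s ∈ (0, 1)` with `r > 1/2` or `s < 1/2`, the angle between
`u = (r − 1/2, −1)` and `v = (1, s − 1/2)` lies strictly between `arccos(4/5)`
and `arccos(−1/√5)`; in particular it is strictly less than `3π/4`. -/
theorem stmt5 (r s : ℝ) (hr : r ∈ Set.Ioo (0 : ℝ) 1) (hs : s ∈ Set.Ioo (0 : ℝ) 1)
    (hrs : 1 / 2 < r ∨ s < 1 / 2)
    (u v : EuclideanSpace ℝ (Fin 2))
    (hu : u = vec2 (r - 1 / 2) (-1)) (hv : v = vec2 1 (s - 1 / 2)) :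
    Real.arccos (4 / 5) < InnerProductGeometry.angle u v ∧
    InnerProductGeometry.angle u v < Real.arccos (-(1 / Real.sqrt 5)) ∧
    InnerProductGeometry.angle u v < 3 * Real.pi / 4 := by
  obtain ⟨hr0, hr1⟩ := hr
  obtain ⟨hs0, hs1⟩ := hs
  obtain ⟨hlb, hub⟩ := aux_bounds (r - 1/2) (s - 1/2) (by linarith) (by linarith)
    (by linarith) (by linarith)
    (by rcases hrs with h | h; exacts [Or.inl (by linarith), Or.inr (by linarith)])
  have hs5 : (2:ℝ) < Real.sqrt 5 := by
    rw [Real.lt_sqrt (by norm_num)]; norm_num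
  have hs5pos : (0:ℝ) < Real.sqrt 5 := by linarith
  set c : ℝ := (r - 1/2 - (s - 1/2)) /
      (Real.sqrt ((r - 1/2) ^ 2 + 1) * Real.sqrt (1 + (s - 1/2) ^ 2)) with hc_def
  have hcos : InnerProductGeometry.angle u v = Real.arccos c := by
    rw [InnerProductGeometry.angle, hu, hv, vec2_inner, vec2_norm, vec2_norm, hc_def]
    norm_num
  have hcosIcc : c ∈ Set.Icc (-1 : ℝ) 1 := by
    constructor
    · have : -(1:ℝ) ≤ -(1 / Real.sqrt 5) := by
        rw [neg_le_neg_iff, div_le_one hs5pos]; linarith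
      linarith
    · linarith
  have h45Icc : (4/5 : ℝ) ∈ Set.Icc (-1 : ℝ) 1 := by norm_num
  have hm5Icc : -(1 / Real.sqrt 5) ∈ Set.Icc (-1 : ℝ) 1 := by
    constructor
    · rw [neg_le_neg_iff, div_le_one hs5pos]; linarith
    · have : (0:ℝ) < 1 / Real.sqrt 5 := by positivity
      linarith
  have hlow : Real.arccos (4 / 5) < InnerProductGeometry.angle u v := by
    rw [hcos]; exact Real.strictAntiOn_arccos hcosIcc h45Icc hub
  have hhigh : InnerProductGeometry.angle u v < Real.arccos (-(1 / Real.sqrt 5)) := by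
    rw [hcos]; exact Real.strictAntiOn_arccos hm5Icc hcosIcc hlb
  refine ⟨hlow, hhigh, ?_⟩
  have h34 : 3 * Real.pi / 4 = Real.arccos (-(Real.sqrt 2 / 2)) := by
    rw [show -(Real.sqrt 2 / 2) = Real.cos (3 * Real.pi / 4) by
      rw [show 3 * Real.pi / 4 = Real.pi - Real.pi / 4 by ring, Real.cos_pi_sub,
        Real.cos_pi_div_four]]
    rw [Real.arccos_cos (by positivity) (by nlinarith [Real.pi_pos])]
  have hkey2 : -(Real.sqrt 2 / 2) < -(1 / Real.sqrt 5) := by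
    rw [neg_lt_neg_iff]
    have h1 : 1 / Real.sqrt 5 < 1 / 2 := by
      rw [div_lt_div_iff₀ hs5pos (by norm_num)]; linarith
    have h2 : (1:ℝ) ≤ Real.sqrt 2 := by
      rw [Real.le_sqrt' one_pos]; norm_num
    linarith
  have h2Icc : -(Real.sqrt 2 / 2) ∈ Set.Icc (-1 : ℝ) 1 := by
    have hle : Real.sqrt 2 ≤ 2 := by
      have := Real.sqrt_lt' (show (0:ℝ) < 2 by norm_num) (x := 2)
      nlinarith [this.mpr (by norm_num : (2:ℝ) < 2^2)]
    constructor <;> nlinarith [Real.sqrt_nonneg 2]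
  rw [h34]
  exact lt_trans hhigh (Real.strictAntiOn_arccos h2Icc hm5Icc hkey2)
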